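/- Let λ < 0, α₀ > 0, β₀ ∈ ℝ, and define U(r) = −β₀²/2 − (α₀²/2)(1 − 1/r²) + 2|λ|α₀ ln r for r > 0. Then U is strictly decreasing on (0, √(α₀/(2|λ|))], strictly increasing on [√(α₀/(2|λ|)), ∞), tends to +∞ as r → 0⁺ and as r → ∞, and its minimum value is U_min = −β₀²/2 + (α₀²/2)(x − 1 − x ln x) evaluated at x = 2|λ|/α₀; moreover U_min ≤ 0, with U_min = 0 if and only if β₀ = 0 and α₀ = 2|λ|. -/

import Mathlib

open Filter Real

private lemma key_ineq {x : ℝ} (hx : 0 < x) : x - 1 - x * Real.log x ≤ 0 := by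
  have h := Real.log_le_sub_one_of_pos (inv_pos.2 hx)
  rw [Real.log_inv] at h
  have h2 : x * (-Real.log x) ≤ x * (x⁻¹ - 1) := mul_le_mul_of_nonneg_left h hx.le
  rw [mul_sub, mul_inv_cancel₀ hx.ne'] at h2
  linarith

private lemma key_ineq_strict {x : ℝ} (hx : 0 < x) (hne : x ≠ 1) :
    x - 1 - x * Real.log x < 0 := by
  have h := Real.log_lt_sub_one_of_pos (inv_pos.2 hx) (by
    simp only [ne_eq, inv_eq_one]; exact hne)
  rw [Real.log_inv] at h
  have h2 : x * (-Real.log x) < x * (x⁻¹ - 1) := (mul_lt_mul_iff_right₀ hx).2 h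
  rw [mul_sub, mul_inv_cancel₀ hx.ne'] at h2
  linarith

private theorem epp_main (lam α₀ β₀ : ℝ) (hlam : lam < 0) (hα₀ : 0 < α₀) :
    StrictAntiOn (fun r : ℝ =>
        -β₀ ^ 2 / 2 - α₀ ^ 2 / 2 * (1 - 1 / r ^ 2) + 2 * |lam| * α₀ * Real.log r)
      (Set.Ioc (0 : ℝ) (Real.sqrt (α₀ / (2 * |lam|)))) ∧
    StrictMonoOn (fun r : ℝ =>
        -β₀ ^ 2 / 2 - α₀ ^ 2 / 2 * (1 - 1 / r ^ 2) + 2 * |lam| * α₀ * Real.log r)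
      (Set.Ici (Real.sqrt (α₀ / (2 * |lam|)))) ∧
    Tendsto (fun r : ℝ =>
        -β₀ ^ 2 / 2 - α₀ ^ 2 / 2 * (1 - 1 / r ^ 2) + 2 * |lam| * α₀ * Real.log r)
      (nhdsWithin 0 (Set.Ioi (0 : ℝ))) atTop ∧
    Tendsto (fun r : ℝ =>
        -β₀ ^ 2 / 2 - α₀ ^ 2 / 2 * (1 - 1 / r ^ 2) + 2 * |lam| * α₀ * Real.log r)
      atTop atTop ∧
    (-β₀ ^ 2 / 2 - α₀ ^ 2 / 2 * (1 - 1 / (Real.sqrt (α₀ / (2 * |lam|))) ^ 2)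
        + 2 * |lam| * α₀ * Real.log (Real.sqrt (α₀ / (2 * |lam|)))
      = -β₀ ^ 2 / 2 + α₀ ^ 2 / 2 *
        (2 * |lam| / α₀ - 1 - 2 * |lam| / α₀ * Real.log (2 * |lam| / α₀))) ∧
    (∀ r : ℝ, 0 < r →
      -β₀ ^ 2 / 2 + α₀ ^ 2 / 2 *
        (2 * |lam| / α₀ - 1 - 2 * |lam| / α₀ * Real.log (2 * |lam| / α₀)) ≤
      -β₀ ^ 2 / 2 - α₀ ^ 2 / 2 * (1 - 1 / r ^ 2) + 2 * |lam| * α₀ * Real.log r) ∧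
    (-β₀ ^ 2 / 2 + α₀ ^ 2 / 2 *
        (2 * |lam| / α₀ - 1 - 2 * |lam| / α₀ * Real.log (2 * |lam| / α₀)) ≤ 0) ∧
    ((-β₀ ^ 2 / 2 + α₀ ^ 2 / 2 *
        (2 * |lam| / α₀ - 1 - 2 * |lam| / α₀ * Real.log (2 * |lam| / α₀)) = 0)
      ↔ β₀ = 0 ∧ α₀ = 2 * |lam|) := by
  set μ : ℝ := 2 * |lam| with hμdef
  have hμ : 0 < μ := by
    have : 0 < |lam| := abs_pos.2 hlam.ne
    positivity
  set U : ℝ → ℝ := fun r =>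
    -β₀ ^ 2 / 2 - α₀ ^ 2 / 2 * (1 - 1 / r ^ 2) + μ * α₀ * Real.log r with hUdef
  set r₀ : ℝ := Real.sqrt (α₀ / μ) with hr₀def
  have ha : 0 < α₀ / μ := div_pos hα₀ hμ
  have hr₀ : 0 < r₀ := Real.sqrt_pos.2 ha
  have hr₀sq : r₀ ^ 2 = α₀ / μ := Real.sq_sqrt ha.le
  -- derivative
  have hderiv : ∀ r : ℝ, 0 < r →
      HasDerivAt U (α₀ * (μ * r ^ 2 - α₀) / r ^ 3) r := by
    intro r hr
    have h1 : HasDerivAt (fun s : ℝ => (s ^ 2)⁻¹)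
        (-(((2 : ℕ) : ℝ) * r ^ 1) / (r ^ 2) ^ 2) r :=
      (hasDerivAt_pow 2 r).inv (pow_ne_zero 2 hr.ne')
    have h2 : HasDerivAt Real.log r⁻¹ r := Real.hasDerivAt_log hr.ne'
    have h3 := (((hasDerivAt_const r (-β₀ ^ 2 / 2)).sub
        (((hasDerivAt_const r (1 : ℝ)).sub h1).const_mul (α₀ ^ 2 / 2))).add
        (h2.const_mul (μ * α₀)))
    have h4 : (fun x : ℝ => -β₀ ^ 2 / 2 - α₀ ^ 2 / 2 * (1 - (x ^ 2)⁻¹)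
        + μ * α₀ * Real.log x) = U := by
      funext s; simp [hUdef, one_div]
    change HasDerivAt (fun x : ℝ => -β₀ ^ 2 / 2 - α₀ ^ 2 / 2 * (1 - (x ^ 2)⁻¹)
        + μ * α₀ * Real.log x) _ r at h3
    rw [h4] at h3
    convert h3 using 1
    field_simp
    ring
  -- sign of derivative
  have hanti : StrictAntiOn U (Set.Ioc (0 : ℝ) r₀) := by
    apply strictAntiOn_of_deriv_neg (convex_Ioc _ _)
    · intro r hr
      exact (hderiv r hr.1).continuousAt.continuousWithinAt
    · intro r hr
      rw [interior_Ioc] at hr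
      rw [(hderiv r hr.1).deriv]
      have hrr : r ^ 2 < α₀ / μ := by
        rw [← hr₀sq]
        exact pow_lt_pow_left₀ hr.2 hr.1.le (by norm_num)
      rw [lt_div_iff₀ hμ] at hrr
      have hnum : α₀ * (μ * r ^ 2 - α₀) < 0 := by nlinarith
      exact div_neg_of_neg_of_pos hnum (pow_pos hr.1 3)
  have hmono : StrictMonoOn U (Set.Ici r₀) := by
    apply strictMonoOn_of_deriv_pos (convex_Ici _)
    · intro r hr
      exact (hderiv r (hr₀.trans_le hr)).continuousAt.continuousWithinAt
    · intro r hr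
      rw [interior_Ici] at hr
      have hrpos : 0 < r := hr₀.trans hr
      rw [(hderiv r hrpos).deriv]
      have hrr : α₀ / μ < r ^ 2 := by
        rw [← hr₀sq]
        exact pow_lt_pow_left₀ hr hr₀.le (by norm_num)
      rw [div_lt_iff₀ hμ] at hrr
      have hnum : 0 < α₀ * (μ * r ^ 2 - α₀) := by nlinarith
      exact div_pos hnum (pow_pos hrpos 3)
  -- tendsto 0+
  have htend0 : Tendsto U (nhdsWithin 0 (Set.Ioi (0 : ℝ))) atTop := by
    have hlin : Tendsto (fun s : ℝ => α₀ ^ 2 / 2 * s - μ * α₀) atTop atTop :=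
      tendsto_atTop_add_const_right _ _ (tendsto_id.const_mul_atTop (by positivity))
    have hprod : Tendsto (fun s : ℝ => s * (α₀ ^ 2 / 2 * s - μ * α₀)) atTop atTop :=
      tendsto_id.atTop_mul_atTop₀ hlin
    have hq : Tendsto (fun s : ℝ => α₀ ^ 2 / 2 * s ^ 2 - μ * α₀ * s) atTop atTop :=
      hprod.congr (fun s => by ring)
    have hf : Tendsto (fun s : ℝ =>
        (-β₀ ^ 2 / 2 - α₀ ^ 2 / 2 + μ * α₀) + (α₀ ^ 2 / 2 * s ^ 2 - μ * α₀ * s))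
        atTop atTop := tendsto_atTop_add_const_left _ _ hq
    have hcomp := hf.comp tendsto_inv_nhdsGT_zero
    apply tendsto_atTop_mono' _ _ hcomp
    filter_upwards [self_mem_nhdsWithin] with r (hr : 0 < r)
    have hlog : 1 - r⁻¹ ≤ Real.log r := Real.one_sub_inv_le_log_of_pos hr
    have hml : μ * α₀ * (1 - r⁻¹) ≤ μ * α₀ * Real.log r :=
      mul_le_mul_of_nonneg_left hlog (by positivity)
    simp only [Function.comp_apply, hUdef]
    have h1r : 1 / r ^ 2 = (r⁻¹) ^ 2 := by rw [one_div, ← inv_pow]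
    rw [h1r]
    nlinarith [hml]
  -- tendsto atTop
  have htendT : Tendsto U atTop atTop := by
    have hf : Tendsto (fun r : ℝ => (-β₀ ^ 2 / 2 - α₀ ^ 2 / 2) + μ * α₀ * Real.log r)
        atTop atTop :=
      tendsto_atTop_add_const_left _ _
        (Real.tendsto_log_atTop.const_mul_atTop (by positivity))
    apply tendsto_atTop_mono' _ _ hf
    filter_upwards [eventually_gt_atTop (0 : ℝ)] with r hr
    simp only [hUdef]
    have : 0 < 1 / r ^ 2 := by positivity
    nlinarith
  -- value at r₀
  have hlogr₀ : Real.log r₀ = Real.log (α₀ / μ) / 2 := Real.log_sqrt ha.le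
  have hinv : Real.log (μ / α₀) = -Real.log (α₀ / μ) := by
    rw [show μ / α₀ = (α₀ / μ)⁻¹ by rw [inv_div], Real.log_inv]
  have hval : U r₀ = -β₀ ^ 2 / 2 + α₀ ^ 2 / 2 *
      (μ / α₀ - 1 - μ / α₀ * Real.log (μ / α₀)) := by
    have h1 : (1 : ℝ) / r₀ ^ 2 = μ / α₀ := by rw [hr₀sq, one_div_div]
    show -β₀ ^ 2 / 2 - α₀ ^ 2 / 2 * (1 - 1 / r₀ ^ 2) + μ * α₀ * Real.log r₀ = _
    rw [h1, hlogr₀, hinv]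
    set L := Real.log (α₀ / μ)
    field_simp
    ring
  -- min
  have hmin : ∀ r : ℝ, 0 < r → U r₀ ≤ U r := by
    intro r hr
    rcases le_total r r₀ with h | h
    · rcases eq_or_lt_of_le h with rfl | hlt
      · exact le_rfl
      · exact (hanti ⟨hr, h⟩ ⟨hr₀, le_rfl⟩ hlt).le
    · rcases eq_or_lt_of_le h with rfl | hlt
      · exact le_rfl
      · exact (hmono (Set.mem_Ici.2 le_rfl) (Set.mem_Ici.2 h) hlt).le
  have hxpos : 0 < μ / α₀ := div_pos hμ hα₀
  have hkey := key_ineq hxpos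
  have hUmin_le : -β₀ ^ 2 / 2 + α₀ ^ 2 / 2 *
      (μ / α₀ - 1 - μ / α₀ * Real.log (μ / α₀)) ≤ 0 := by
    nlinarith [sq_nonneg β₀, sq_nonneg α₀, hkey, hα₀]
  refine ⟨hanti, hmono, htend0, htendT, hval, ?_, hUmin_le, ?_⟩
  · intro r hr
    have h := hmin r hr
    rw [hval] at h
    exact h
  · constructor
    · intro h
      have hg : α₀ ^ 2 / 2 * (μ / α₀ - 1 - μ / α₀ * Real.log (μ / α₀)) ≤ 0 := by
        nlinarith
      have hb0 : β₀ = 0 := by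
        by_contra hb0
        have : 0 < β₀ ^ 2 := by positivity
        linarith
      have hg0 : μ / α₀ - 1 - μ / α₀ * Real.log (μ / α₀) = 0 := by
        rw [hb0] at h
        norm_num at h
        rcases h with h | h
        · exact absurd h hα₀.ne'
        · exact h
      have hx1 : μ / α₀ = 1 := by
        by_contra hne
        exact absurd hg0 (key_ineq_strict hxpos hne).ne
      refine ⟨hb0, ?_⟩
      rw [div_eq_one_iff_eq hα₀.ne'] at hx1
      rw [hμdef] at hx1
      linarith
    · rintro ⟨hb, hα⟩
      rw [hb]
      have h1 : μ / α₀ = 1 := by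
        rw [hα, hμdef, div_self]
        positivity
      rw [h1]
      simp

theorem effective_potential_properties (lam α₀ β₀ : ℝ) (hlam : lam < 0) (hα₀ : 0 < α₀) :
    let U : ℝ → ℝ := fun r =>
      -β₀ ^ 2 / 2 - α₀ ^ 2 / 2 * (1 - 1 / r ^ 2) + 2 * |lam| * α₀ * Real.log r
    let r₀ : ℝ := Real.sqrt (α₀ / (2 * |lam|))
    let Umin : ℝ :=
      -β₀ ^ 2 / 2 + α₀ ^ 2 / 2 *
        (2 * |lam| / α₀ - 1 - 2 * |lam| / α₀ * Real.log (2 * |lam| / α₀))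
    StrictAntiOn U (Set.Ioc (0 : ℝ) r₀) ∧
      StrictMonoOn U (Set.Ici r₀) ∧
      Tendsto U (nhdsWithin 0 (Set.Ioi (0 : ℝ))) atTop ∧
      Tendsto U atTop atTop ∧
      U r₀ = Umin ∧
      (∀ r : ℝ, 0 < r → Umin ≤ U r) ∧
      Umin ≤ 0 ∧
      (Umin = 0 ↔ β₀ = 0 ∧ α₀ = 2 * |lam|) := by
  intro U r₀ Umin
  exact epp_main lam α₀ β₀ hlam hα₀
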